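/- arXiv:1107.5301 — 2 statements merged into one kernel-verified Lean document; each statement's English description precedes it below -/
import Mathlib

section
/- For every d ≥ 1, every real δ ∈ (0,1], and every sufficiently large n, every subset H of V(T_n) with w(H) ≥ δn contains a replica of T_d; in fact it suffices that 2^(δn) > Σ_{i=0}^{d−1} C(n,i), which holds for all n ≥ n₀(d,δ). -/
/-- Vertex set of the full binary tree `T_n` of depth `n-1`:
binary strings of length `< n`; the level of a vertex is its length. -/
def treeVerts (n : ℕ) : Set (List Bool) := {x | x.length < n}

/-- Weight of a set of vertices: `w(H) = Σ_{x ∈ H} 2^(-level x)`. -/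
noncomputable def weight (H : Set (List Bool)) : ℝ :=
  ∑' x : H, (2 : ℝ) ^ (-((x : List Bool).length : ℤ))

/-- `f` is a regular embedding of `T_d`: vertices at equal levels map to equal
levels, and the two children of each vertex map to descendants of distinct
children of the image (descendant = extension of the string). -/
def IsRegEmb (d : ℕ) (f : List Bool → List Bool) : Prop :=
  (∀ x y : List Bool, x.length < d → y.length < d → x.length = y.length →
      (f x).length = (f y).length) ∧
  (∀ x : List Bool, x.length + 1 < d → ∃ c : Bool,
      (f x ++ [c]) <+: f (x ++ [false]) ∧ (f x ++ [!c]) <+: f (x ++ [true]))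

/-- `S(H)`: the set of signatures (sets of occupied levels) of all regular
embeddings of some `T_d`, `d ≥ 0`, into `H`. -/
def sigs (H : Set (List Bool)) : Set (Set ℕ) :=
  {σ | ∃ (d : ℕ) (f : List Bool → List Bool), IsRegEmb d f ∧
      (∀ x : List Bool, x.length < d → f x ∈ H) ∧
      σ = {l : ℕ | ∃ x : List Bool, x.length < d ∧ (f x).length = l}}

namespace Stmt16


def sub (b : Bool) (H : Set (List Bool)) : Set (List Bool) := {t | b :: t ∈ H}

def sigOf (d : ℕ) (f : List Bool → List Bool) : Set ℕ :=
  {l : ℕ | ∃ x : List Bool, x.length < d ∧ (f x).length = l}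

def lvl (f : List Bool → List Bool) (j : ℕ) : ℕ := (f (List.replicate j false)).length

theorem IsRegEmb.mono {d d' : ℕ} {f} (h : IsRegEmb d' f) (hd : d ≤ d') : IsRegEmb d f :=
  ⟨fun x y hx hy => h.1 x y (lt_of_lt_of_le hx hd) (lt_of_lt_of_le hy hd),
   fun x hx => h.2 x (lt_of_lt_of_le hx hd)⟩

theorem lvl_eq {d f} (hf : IsRegEmb d f) {x : List Bool} (hx : x.length < d) :
    (f x).length = lvl f x.length :=
  hf.1 x (List.replicate x.length false) hx (by simpa using hx) (by simp)

theorem lvl_lt_succ {d f} (hf : IsRegEmb d f) {j : ℕ} (hj : j + 1 < d) :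
    lvl f j < lvl f (j + 1) := by
  obtain ⟨c, hc, -⟩ := hf.2 (List.replicate j false) (by simpa using hj)
  have h1 : List.replicate (j + 1) false = List.replicate j false ++ [false] := by
    simp [List.replicate_succ']
  have h2 := hc.length_le
  simp only [List.length_append, List.length_cons, List.length_nil] at h2
  simp only [lvl, h1]
  omega

theorem lvl_mono {d f} (hf : IsRegEmb d f) {i j : ℕ} (hij : i < j) (hj : j < d) :
    lvl f i < lvl f j := by
  induction j with
  | zero => omega
  | succ k ih =>
    rcases Nat.lt_succ_iff_lt_or_eq.mp hij with h | h
    · exact lt_trans (ih h (by omega)) (lvl_lt_succ hf hj)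
    · subst h; exact lvl_lt_succ hf hj

theorem sigOf_eq {d f} (hf : IsRegEmb d f) : sigOf d f = lvl f '' Set.Iio d := by
  ext l
  constructor
  · rintro ⟨x, hx, rfl⟩
    exact ⟨x.length, hx, (lvl_eq hf hx).symm⟩
  · rintro ⟨j, hj, rfl⟩
    exact ⟨List.replicate j false, by simpa using hj, rfl⟩

theorem lvl_injOn {d f} (hf : IsRegEmb d f) : Set.InjOn (lvl f) (Set.Iio d) := by
  intro a ha b hb hab
  by_contra h
  rcases lt_or_gt_of_ne h with h | h
  · exact absurd hab (ne_of_lt (lvl_mono hf h hb))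
  · exact absurd hab.symm (ne_of_lt (lvl_mono hf h ha))

theorem ncard_sigOf {d f} (hf : IsRegEmb d f) : (sigOf d f).ncard = d := by
  rw [sigOf_eq hf, Set.ncard_image_of_injOn (lvl_injOn hf), ← Finset.coe_range,
    Set.ncard_coe_finset, Finset.card_range]


theorem mem_sigs_iff {H σ} : σ ∈ sigs H ↔ ∃ d f, IsRegEmb d f ∧
    (∀ x : List Bool, x.length < d → f x ∈ H) ∧ σ = sigOf d f := Iff.rfl

/-- Same signature forces same depth and same level function. -/
theorem lvl_eq_of_sigOf_eq {d₀ d₁ f₀ f₁} (h₀ : IsRegEmb d₀ f₀) (h₁ : IsRegEmb d₁ f₁)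
    (hσ : sigOf d₀ f₀ = sigOf d₁ f₁) : d₀ = d₁ ∧ ∀ j < d₀, lvl f₀ j = lvl f₁ j := by
  have hd : d₀ = d₁ := by
    rw [← ncard_sigOf h₀, ← ncard_sigOf h₁, hσ]
  subst hd
  refine ⟨rfl, ?_⟩
  set s : Finset ℕ := (Finset.range d₀).image (lvl f₀) with hs
  have hcard : s.card = d₀ := by
    rw [hs, Finset.card_image_of_injOn (by simpa using lvl_injOn h₀), Finset.card_range]
  have hmem : ∀ (g : List Bool → List Bool), sigOf d₀ g = sigOf d₀ f₀ →
      ∀ i : Fin d₀, lvl g i ∈ s := by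
    intro g hg i
    have : lvl g i ∈ sigOf d₀ f₀ := by
      rw [← hg]
      exact ⟨List.replicate i false, by simpa using i.2, rfl⟩
    rw [sigOf_eq h₀] at this
    obtain ⟨j, hj, hji⟩ := this
    exact Finset.mem_image.mpr ⟨j, Finset.mem_range.mpr hj, hji⟩
  have hu0 := Finset.orderEmbOfFin_unique hcard (f := fun i : Fin d₀ => lvl f₀ i)
    (hmem f₀ rfl) (fun i j hij => lvl_mono h₀ hij j.2)
  have hu1 := Finset.orderEmbOfFin_unique hcard (f := fun i : Fin d₀ => lvl f₁ i)
    (hmem f₁ hσ.symm) (fun i j hij => lvl_mono h₁ hij j.2)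
  intro j hj
  have := congrFun (hu0.trans hu1.symm) ⟨j, hj⟩
  simpa using this

theorem shift_mem {H : Set (List Bool)} {b : Bool} {σ : Set ℕ} (hσ : σ ∈ sigs (sub b H)) :
    (fun l => l + 1) '' σ ∈ sigs H := by
  obtain ⟨d, f, hf, hmem, rfl⟩ := hσ
  refine ⟨d, fun x => b :: f x, ⟨?_, ?_⟩, fun x hx => hmem x hx, ?_⟩
  · intro x y hx hy hxy
    simpa using hf.1 x y hx hy hxy
  · intro x hx
    obtain ⟨c, h0, h1⟩ := hf.2 x hx
    exact ⟨c, by simpa [List.cons_prefix_cons] using h0, by simpa [List.cons_prefix_cons] using h1⟩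
  · ext l
    simp only [Set.mem_image, Set.mem_setOf_eq]
    constructor
    · rintro ⟨m, ⟨x, hx, rfl⟩, rfl⟩
      exact ⟨x, hx, by simp⟩
    · rintro ⟨x, hx, rfl⟩
      exact ⟨(f x).length, ⟨x, hx, rfl⟩, by simp⟩

def glue (f₀ f₁ : List Bool → List Bool) : List Bool → List Bool
  | [] => []
  | (b :: t) => b :: (if b then f₁ t else f₀ t)

theorem combine_mem {H : Set (List Bool)} {σ : Set ℕ} (hroot : ([] : List Bool) ∈ H)
    (h0 : σ ∈ sigs (sub false H)) (h1 : σ ∈ sigs (sub true H)) :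
    insert 0 ((fun l => l + 1) '' σ) ∈ sigs H := by
  obtain ⟨d₀, f₀, hf₀, hm₀, hσ₀⟩ := h0
  obtain ⟨d₁, f₁, hf₁, hm₁, hσ₁⟩ := h1
  have hσeq : sigOf d₀ f₀ = sigOf d₁ f₁ := hσ₀.symm.trans hσ₁
  obtain ⟨hd, hl⟩ := lvl_eq_of_sigOf_eq hf₀ hf₁ hσeq
  subst hd
  -- length of images of the glued map
  have hlen : ∀ (b : Bool) (t : List Bool), t.length < d₀ →
      ((if b then f₁ t else f₀ t)).length = lvl f₀ t.length := by
    intro b t ht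
    cases b
    · simpa using lvl_eq hf₀ ht
    · simp only [if_true]
      rw [lvl_eq hf₁ ht, hl _ ht]
  refine ⟨d₀ + 1, glue f₀ f₁, ⟨?_, ?_⟩, ?_, ?_⟩
  · rintro (_ | ⟨b, t⟩) (_ | ⟨b', t'⟩) hx hy hxy
    · rfl
    · simp at hxy
    · simp at hxy
    · simp only [List.length_cons] at hx hy hxy
      show (b :: _).length = (b' :: _).length
      simp only [List.length_cons]
      have htt : t.length = t'.length := by omega
      rw [hlen b t (by omega), hlen b' t' (by omega), htt]
  · rintro (_ | ⟨b, t⟩) hx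
    · refine ⟨false, ?_, ?_⟩
      · show ([] : List Bool) ++ [false] <+: glue f₀ f₁ [false]
        show [false] <+: false :: f₀ []
        simp [List.cons_prefix_cons]
      · show ([] : List Bool) ++ [!false] <+: glue f₀ f₁ [true]
        show [!false] <+: true :: f₁ []
        simp [List.cons_prefix_cons]
    · simp only [List.length_cons] at hx
      cases b
      · obtain ⟨c, hc0, hc1⟩ := hf₀.2 t (by omega)
        refine ⟨c, ?_, ?_⟩
        · show (false :: f₀ t) ++ [c] <+: glue f₀ f₁ (false :: (t ++ [false]))
          show false :: (f₀ t ++ [c]) <+: false :: f₀ (t ++ [false])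
          simpa [List.cons_prefix_cons] using hc0
        · show (false :: f₀ t) ++ [!c] <+: glue f₀ f₁ (false :: (t ++ [true]))
          show false :: (f₀ t ++ [!c]) <+: false :: f₀ (t ++ [true])
          simpa [List.cons_prefix_cons] using hc1
      · obtain ⟨c, hc0, hc1⟩ := hf₁.2 t (by omega)
        refine ⟨c, ?_, ?_⟩
        · show (true :: f₁ t) ++ [c] <+: glue f₀ f₁ (true :: (t ++ [false]))
          show true :: (f₁ t ++ [c]) <+: true :: f₁ (t ++ [false])
          simpa [List.cons_prefix_cons] using hc0
        · show (true :: f₁ t) ++ [!c] <+: glue f₀ f₁ (true :: (t ++ [true]))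
          show true :: (f₁ t ++ [!c]) <+: true :: f₁ (t ++ [true])
          simpa [List.cons_prefix_cons] using hc1
  · rintro (_ | ⟨b, t⟩) hx
    · exact hroot
    · simp only [List.length_cons] at hx
      cases b
      · exact hm₀ t (by omega)
      · exact hm₁ t (by omega)
  · ext l
    simp only [Set.mem_setOf_eq, Set.mem_insert_iff, Set.mem_image]
    constructor
    · rintro (rfl | ⟨m, hm, rfl⟩)
      · exact ⟨[], by simp, rfl⟩
      · rw [hσ₀] at hm
        obtain ⟨x, hx, rfl⟩ := hm
        refine ⟨false :: x, by simpa using hx, ?_⟩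
        show (false :: (if false then f₁ x else f₀ x)).length = _
        simp
    · rintro ⟨x, hx, rfl⟩
      rcases x with _ | ⟨b, t⟩
      · exact Or.inl rfl
      · right
        have ht : t.length < d₀ := by simpa using hx
        refine ⟨lvl f₀ t.length, ?_, ?_⟩
        · rw [hσ₀]; exact ⟨List.replicate t.length false, by simpa using ht, rfl⟩
        · show _ = (b :: (if b then f₁ t else f₀ t)).length
          rw [List.length_cons, hlen b t ht]


theorem sub_finite {H : Set (List Bool)} (hH : H.Finite) (b : Bool) : (sub b H).Finite := by
  have : sub b H = (List.cons b) ⁻¹' H := rfl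
  rw [this]
  exact Set.Finite.preimage (fun x _ y _ h => by simpa using h) hH

open Classical in
theorem weight_rec (H : Set (List Bool)) (hH : H.Finite) :
    weight H = (if ([] : List Bool) ∈ H then 1 else 0)
      + (weight (sub false H) + weight (sub true H)) / 2 := by
  classical
  have hdec : H = (H ∩ {[]}) ∪ ((List.cons false '' sub false H) ∪ (List.cons true '' sub true H)) := by
    ext x
    rcases x with _ | ⟨b, t⟩
    · simp [sub]
    · cases b <;> simp [sub]
  have hpre : ∀ b : Bool, (sub b H).Finite := sub_finite hH
  have himfin : ∀ b : Bool, (List.cons b '' sub b H).Finite := fun b => ((hpre b).image _)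
  have hdisj2 : Disjoint (List.cons false '' sub false H) (List.cons true '' sub true H) := by
    rw [Set.disjoint_left]
    rintro x ⟨t, _, rfl⟩ ⟨t', _, h⟩
    simp at h
  have hdisj1 : Disjoint (H ∩ {([] : List Bool)})
      ((List.cons false '' sub false H) ∪ (List.cons true '' sub true H)) := by
    rw [Set.disjoint_left]
    rintro x ⟨_, rfl⟩ hx
    rcases hx with ⟨t, _, h⟩ | ⟨t, _, h⟩ <;> simp at h
  set φ : List Bool → ℝ := fun x => (2 : ℝ) ^ (-(x.length : ℤ)) with hφ
  have himg : ∀ b : Bool, ∑' x : (List.cons b '' sub b H), φ x = weight (sub b H) / 2 := by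
    intro b
    rw [tsum_image φ (fun x _ y _ h => by simpa using h)]
    have : ∀ t : sub b H, φ (b :: (t : List Bool)) = (2:ℝ) ^ (-((t : List Bool).length : ℤ)) * 2⁻¹ := by
      intro t
      rw [hφ]
      simp only [List.length_cons]
      rw [show (-((t : List Bool).length + 1 : ℕ) : ℤ) = (-((t : List Bool).length : ℕ) : ℤ) + (-1) by push_cast; ring]
      rw [zpow_add₀ (by norm_num : (2:ℝ) ≠ 0)]
      norm_num
    rw [tsum_congr this, tsum_mul_right]
    rw [weight]
    ring
  have hroot : ∑' x : (H ∩ {([] : List Bool)} : Set (List Bool)), φ x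
      = if ([] : List Bool) ∈ H then 1 else 0 := by
    by_cases h : ([] : List Bool) ∈ H
    · rw [if_pos h]
      have : H ∩ {([] : List Bool)} = {[]} := by
        ext x; simp (config := {contextual := true}) [h]
      rw [this, tsum_singleton]
      simp [hφ]
    · rw [if_neg h]
      rw [Set.inter_singleton_eq_empty.mpr h]
      simp [tsum_empty]
  calc weight H = ∑' x : H, φ x := rfl
    _ = ∑' x : ((H ∩ {[]}) ∪ ((List.cons false '' sub false H) ∪ (List.cons true '' sub true H)) : Set (List Bool)), φ x := by rw [← hdec]
    _ = (∑' x : (H ∩ {([] : List Bool)} : Set (List Bool)), φ x)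
        + ∑' x : (((List.cons false '' sub false H) ∪ (List.cons true '' sub true H)) : Set (List Bool)), φ x := by
        rw [Summable.tsum_union_disjoint hdisj1 ((hH.inter_of_left _).summable _)
          (((himfin false).union (himfin true)).summable _)]
    _ = (if ([] : List Bool) ∈ H then 1 else 0) + (weight (sub false H) / 2 + weight (sub true H) / 2) := by
        rw [hroot, Summable.tsum_union_disjoint hdisj2 ((himfin false).summable _) ((himfin true).summable _),
          himg false, himg true]
    _ = _ := by ring

theorem weight_empty : weight (∅ : Set (List Bool)) = 0 := by
  rw [weight, tsum_empty]

open Classical in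
theorem empty_mem_sigs (H : Set (List Bool)) : (∅ : Set ℕ) ∈ sigs H := by
  refine ⟨0, id, ⟨?_, ?_⟩, ?_, ?_⟩ <;>
    first
      | (intro x y hx; exact absurd hx (by omega))
      | (intro x hx; exact absurd hx (by omega))
      | (ext l; simp)

theorem sigs_finite {n : ℕ} {H : Set (List Bool)} (hsub : H ⊆ treeVerts n) :
    (sigs H).Finite := by
  apply Set.Finite.subset (Set.finite_Iio n).finite_subsets
  rintro σ ⟨d, f, hf, hm, rfl⟩
  rintro l ⟨x, hx, rfl⟩
  exact hsub (hm x hx)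

theorem shift_injective : Function.Injective (fun σ : Set ℕ => (fun l => l + 1) '' σ) :=
  Set.image_injective.mpr (add_left_injective 1)

theorem insert_shift_injective :
    Function.Injective (fun σ : Set ℕ => insert 0 ((fun l => l + 1) '' σ)) := by
  have key : ∀ σ τ : Set ℕ, insert 0 ((fun l => l + 1) '' σ) = insert 0 ((fun l => l + 1) '' τ)
      → σ ⊆ τ := by
    intro σ τ h m hm
    have h1 : m + 1 ∈ insert 0 ((fun l => l + 1) '' σ) := Or.inr ⟨m, hm, rfl⟩
    rw [h] at h1
    rcases h1 with h1 | ⟨k, hk, hk2⟩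
    · omega
    · have hk2' : k + 1 = m + 1 := hk2
      have : k = m := by omega
      rwa [← this]
  exact fun σ τ h => le_antisymm (key _ _ h) (key _ _ h.symm)

theorem sub_subset {n : ℕ} {H : Set (List Bool)} (hsub : H ⊆ treeVerts (n + 1)) (b : Bool) :
    sub b H ⊆ treeVerts n := by
  intro t ht
  have := hsub ht
  simpa [treeVerts] using this

theorem key_count : ∀ n : ℕ, ∀ H : Set (List Bool), H ⊆ treeVerts n →
    (2 : ℝ) ^ weight H ≤ ((sigs H).ncard : ℝ) := by
  intro n
  induction n with
  | zero =>
    intro H hsub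
    have hH : H = ∅ := by
      ext x; simpa [treeVerts] using fun hx => hsub hx
    subst hH
    have h0 : weight (∅ : Set (List Bool)) = 0 := by rw [weight, tsum_empty]
    rw [h0, Real.rpow_zero]
    have hfin : (sigs (∅ : Set (List Bool))).Finite := sigs_finite (n := 0) (by simp)
    have : 0 < (sigs (∅ : Set (List Bool))).ncard :=
      (Set.ncard_pos hfin).mpr ⟨∅, empty_mem_sigs _⟩
    exact_mod_cast this
  | succ n ih =>
    intro H hsub
    have hHfin : H.Finite := (List.finite_length_lt Bool (n + 1)).subset hsub
    have hfinS : (sigs H).Finite := sigs_finite hsub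
    have hfin0 : (sigs (sub false H)).Finite := sigs_finite (sub_subset hsub false)
    have hfin1 : (sigs (sub true H)).Finite := sigs_finite (sub_subset hsub true)
    have ih0 := ih _ (sub_subset hsub false)
    have ih1 := ih _ (sub_subset hsub true)
    set w0 := weight (sub false H)
    set w1 := weight (sub true H)
    set S0 := sigs (sub false H)
    set S1 := sigs (sub true H)
    have hA : (fun σ : Set ℕ => (fun l => l + 1) '' σ) '' (S0 ∪ S1) ⊆ sigs H := by
      rintro _ ⟨σ, hσ, rfl⟩
      rcases hσ with hσ | hσ
      · exact shift_mem hσ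
      · exact shift_mem hσ
    set A := (fun σ : Set ℕ => (fun l => l + 1) '' σ) '' (S0 ∪ S1) with hAdef
    have hcardA : A.ncard = (S0 ∪ S1).ncard := Set.ncard_image_of_injective _ shift_injective
    have hfinU : (S0 ∪ S1).Finite := hfin0.union hfin1
    have hfinA : A.Finite := hfinU.image _
    rw [weight_rec H hHfin]
    by_cases hroot : ([] : List Bool) ∈ H
    · rw [if_pos hroot]
      set B := (fun σ : Set ℕ => insert 0 ((fun l => l + 1) '' σ)) '' (S0 ∩ S1) with hBdef
      have hB : B ⊆ sigs H := by
        rintro _ ⟨σ, hσ, rfl⟩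
        exact combine_mem hroot hσ.1 hσ.2
      have hcardB : B.ncard = (S0 ∩ S1).ncard :=
        Set.ncard_image_of_injective _ insert_shift_injective
      have hfinI : (S0 ∩ S1).Finite := hfin0.inter_of_left _
      have hfinB : B.Finite := hfinI.image _
      have hdisj : Disjoint A B := by
        rw [Set.disjoint_left]
        rintro _ ⟨σ, _, rfl⟩ ⟨τ, _, hx⟩
        replace hx : insert 0 ((fun l => l + 1) '' τ) = (fun l => l + 1) '' σ := hx
        have h0 : (0 : ℕ) ∈ insert 0 ((fun l => l + 1) '' τ) := Or.inl rfl
        rw [hx] at h0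
        obtain ⟨k, _, hk⟩ := h0
        exact Nat.succ_ne_zero k hk
      have hcard : (S0.ncard : ℝ) + S1.ncard ≤ ((sigs H).ncard : ℝ) := by
        have h1 : (A ∪ B).ncard = A.ncard + B.ncard := Set.ncard_union_eq hdisj hfinA hfinB
        have h2 : (A ∪ B).ncard ≤ (sigs H).ncard :=
          Set.ncard_le_ncard (Set.union_subset hA hB) hfinS
        have h3 : (S0 ∪ S1).ncard + (S0 ∩ S1).ncard = S0.ncard + S1.ncard :=
          Set.ncard_union_add_ncard_inter S0 S1 hfin0 hfin1
        have hn : S0.ncard + S1.ncard ≤ (sigs H).ncard := by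
          rw [← h3, ← hcardA, ← hcardB, ← h1]
          exact h2
        exact_mod_cast hn
      set u := (2 : ℝ) ^ (w0 / 2)
      set v := (2 : ℝ) ^ (w1 / 2)
      have hu2 : u * u = (2 : ℝ) ^ w0 := by
        rw [← Real.rpow_add (by norm_num : (0:ℝ) < 2)]; ring_nf
      have hv2 : v * v = (2 : ℝ) ^ w1 := by
        rw [← Real.rpow_add (by norm_num : (0:ℝ) < 2)]; ring_nf
      have huv : (2 : ℝ) ^ ((w0 + w1) / 2) = u * v := by
        rw [← Real.rpow_add (by norm_num : (0:ℝ) < 2)]; ring_nf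
      have hrw : (2 : ℝ) ^ (1 + (w0 + w1) / 2) = 2 * (u * v) := by
        rw [Real.rpow_add (by norm_num : (0:ℝ) < 2), ← huv, Real.rpow_one]
      rw [hrw]
      have hamgm : 2 * (u * v) ≤ u * u + v * v := by nlinarith [sq_nonneg (u - v)]
      calc 2 * (u * v) ≤ u * u + v * v := hamgm
        _ = (2:ℝ) ^ w0 + (2:ℝ) ^ w1 := by rw [hu2, hv2]
        _ ≤ (S0.ncard : ℝ) + S1.ncard := add_le_add ih0 ih1
        _ ≤ _ := hcard
    · rw [if_neg hroot]
      rw [zero_add]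
      have hcard : (max S0.ncard S1.ncard : ℝ) ≤ ((sigs H).ncard : ℝ) := by
        have h2 : A.ncard ≤ (sigs H).ncard := Set.ncard_le_ncard hA hfinS
        have h4 : max S0.ncard S1.ncard ≤ (S0 ∪ S1).ncard :=
          max_le (Set.ncard_le_ncard Set.subset_union_left hfinU)
            (Set.ncard_le_ncard Set.subset_union_right hfinU)
        exact_mod_cast le_trans h4 (hcardA ▸ h2)
      rcases le_total w0 w1 with h | h
      · calc (2:ℝ) ^ ((w0 + w1) / 2) ≤ (2:ℝ) ^ w1 :=
              Real.rpow_le_rpow_of_exponent_le one_le_two (by linarith)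
          _ ≤ (S1.ncard : ℝ) := ih1
          _ ≤ (max S0.ncard S1.ncard : ℝ) := by exact_mod_cast Nat.cast_le.mpr (le_max_right _ _)
          _ ≤ _ := hcard
      · calc (2:ℝ) ^ ((w0 + w1) / 2) ≤ (2:ℝ) ^ w0 :=
              Real.rpow_le_rpow_of_exponent_le one_le_two (by linarith)
          _ ≤ (S0.ncard : ℝ) := ih0
          _ ≤ (max S0.ncard S1.ncard : ℝ) := by exact_mod_cast Nat.cast_le.mpr (le_max_left _ _)
          _ ≤ _ := hcard
theorem sigs_card_small {n d : ℕ} {H : Set (List Bool)} (hsub : H ⊆ treeVerts n)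
    (hno : ¬ ∃ f, IsRegEmb d f ∧ ∀ x : List Bool, x.length < d → f x ∈ H) :
    ((sigs H).ncard : ℝ) ≤ ∑ i ∈ Finset.range d, (n.choose i : ℝ) := by
  classical
  set P : Finset (Finset ℕ) :=
    (Finset.range d).biUnion (fun i => Finset.powersetCard i (Finset.range n)) with hP
  have hsubP : sigs H ⊆ (fun s : Finset ℕ => (s : Set ℕ)) '' ↑P := by
    rintro σ ⟨d', f, hf, hm, rfl⟩
    have hσ : ({l : ℕ | ∃ x : List Bool, x.length < d' ∧ (f x).length = l}) = sigOf d' f := rfl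
    rw [hσ]
    have hd' : d' < d := by
      by_contra hge
      exact hno ⟨f, IsRegEmb.mono hf (by omega), fun x hx => hm x (by omega)⟩
    have hfin : (sigOf d' f).Finite := by
      rw [sigOf_eq hf]; exact (Set.finite_Iio d').image _
    refine ⟨hfin.toFinset, ?_, by simp⟩
    refine Finset.mem_coe.mpr (Finset.mem_biUnion.mpr ⟨d', Finset.mem_range.mpr hd', ?_⟩)
    rw [Finset.mem_powersetCard]
    constructor
    · intro l hl
      rw [Set.Finite.mem_toFinset] at hl
      obtain ⟨x, hx, rfl⟩ := hl
      exact Finset.mem_range.mpr (hsub (hm x hx))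
    · rw [← Set.ncard_eq_toFinset_card _ hfin]
      exact ncard_sigOf hf
  have h1 : (sigs H).ncard ≤ ((fun s : Finset ℕ => (s : Set ℕ)) '' ↑P).ncard :=
    Set.ncard_le_ncard hsubP (P.finite_toSet.image _)
  have h2 : ((fun s : Finset ℕ => (s : Set ℕ)) '' ↑P).ncard ≤ P.card := by
    have := Set.ncard_image_le (s := (↑P : Set (Finset ℕ)))
      (f := fun s : Finset ℕ => (s : Set ℕ)) P.finite_toSet
    rwa [Set.ncard_coe_finset] at this
  have h3 : P.card ≤ ∑ i ∈ Finset.range d, n.choose i := by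
    refine le_trans (Finset.card_biUnion_le) ?_
    apply Finset.sum_le_sum
    intro i _
    rw [Finset.card_powersetCard, Finset.card_range]
  have : (sigs H).ncard ≤ ∑ i ∈ Finset.range d, n.choose i := le_trans h1 (le_trans h2 h3)
  calc ((sigs H).ncard : ℝ) ≤ ((∑ i ∈ Finset.range d, n.choose i : ℕ) : ℝ) := by exact_mod_cast this
    _ = ∑ i ∈ Finset.range d, (n.choose i : ℝ) := by push_cast; ring

end Stmt16

open Filter in
theorem aux_eventually (d : ℕ) (hd : 1 ≤ d) (δ : ℝ) (hδ0 : 0 < δ) :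
    ∀ᶠ n : ℕ in atTop, ∑ i ∈ Finset.range d, ((n.choose i : ℕ) : ℝ) < (2 : ℝ) ^ (δ * n) := by
  have hc : 0 < δ * Real.log 2 := mul_pos hδ0 (Real.log_pos (by norm_num))
  set c := δ * Real.log 2 with hcdef
  have hlo := isLittleO_pow_exp_pos_mul_atTop d hc
  rw [Asymptotics.isLittleO_iff] at hlo
  have heps : (0:ℝ) < Real.exp (-c) / (d + 1) := by positivity
  have hev : ∀ᶠ x : ℝ in atTop, ‖x ^ d‖ ≤ (Real.exp (-c) / (d + 1)) * ‖Real.exp (c * x)‖ :=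
    hlo heps
  have hev2 : ∀ᶠ x : ℝ in atTop, (d : ℝ) * x ^ d < Real.exp (c * (x - 1)) := by
    filter_upwards [hev, eventually_ge_atTop (0:ℝ)] with x hx hx0
    rw [Real.norm_of_nonneg (pow_nonneg hx0 d), Real.norm_of_nonneg (Real.exp_nonneg _)] at hx
    have h1 : (d : ℝ) * x ^ d ≤ (d : ℝ) * ((Real.exp (-c) / (d + 1)) * Real.exp (c * x)) :=
      mul_le_mul_of_nonneg_left hx (by positivity)
    have h2 : (d : ℝ) * ((Real.exp (-c) / (d + 1)) * Real.exp (c * x))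
        < Real.exp (-c) * Real.exp (c * x) := by
      have hdd : (d : ℝ) / (d + 1) < 1 := by
        rw [div_lt_one (by positivity)]; linarith
      have hpos : 0 < Real.exp (-c) * Real.exp (c * x) := by positivity
      calc (d : ℝ) * ((Real.exp (-c) / (d + 1)) * Real.exp (c * x))
          = ((d : ℝ) / (d + 1)) * (Real.exp (-c) * Real.exp (c * x)) := by ring
        _ < 1 * (Real.exp (-c) * Real.exp (c * x)) := by
            exact mul_lt_mul_of_pos_right hdd hpos
        _ = Real.exp (-c) * Real.exp (c * x) := by ring
    have h3 : Real.exp (-c) * Real.exp (c * x) = Real.exp (c * (x - 1)) := by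
      rw [← Real.exp_add]; ring_nf
    linarith [h1, h2, h3.symm.le, h3.le]
  have hnat : Filter.Tendsto (fun n : ℕ => ((n : ℝ) + 1)) atTop atTop :=
    Filter.tendsto_atTop_add_const_right _ 1 tendsto_natCast_atTop_atTop
  filter_upwards [hnat.eventually hev2] with n hn
  have hsum : ∑ i ∈ Finset.range d, ((n.choose i : ℕ) : ℝ) ≤ (d : ℝ) * ((n : ℝ) + 1) ^ d := by
    have hbd : ∀ i ∈ Finset.range d, ((n.choose i : ℕ) : ℝ) ≤ ((n : ℝ) + 1) ^ d := by
      intro i hi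
      have h1 : ((n.choose i : ℕ) : ℝ) ≤ ((n : ℕ) : ℝ) ^ i := by
        exact_mod_cast Nat.choose_le_pow n i
      refine le_trans h1 ?_
      calc ((n : ℕ) : ℝ) ^ i ≤ ((n : ℝ) + 1) ^ i :=
            pow_le_pow_left₀ (by positivity) (by linarith) i
        _ ≤ ((n : ℝ) + 1) ^ d :=
            pow_le_pow_right₀ (by linarith) (le_of_lt (Finset.mem_range.mp hi))
    calc ∑ i ∈ Finset.range d, ((n.choose i : ℕ) : ℝ)
        ≤ ∑ _i ∈ Finset.range d, ((n : ℝ) + 1) ^ d := Finset.sum_le_sum hbd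
      _ = (d : ℝ) * ((n : ℝ) + 1) ^ d := by
          rw [Finset.sum_const, Finset.card_range, nsmul_eq_mul]
  have h2 : (2 : ℝ) ^ (δ * n) = Real.exp (c * (((n:ℝ) + 1) - 1)) := by
    rw [Real.rpow_def_of_pos (by norm_num : (0:ℝ) < 2)]
    rw [hcdef]
    ring_nf
  rw [h2]
  exact lt_of_le_of_lt hsum hn


/-- Density theorem (non-arithmetic version): for every `d ≥ 1` and
`δ ∈ (0,1]`, for all sufficiently large `n`, `2^(δn) > Σ_{i=0}^{d-1} C(n,i)`
and every `H ⊆ V(T_n)` with `w(H) ≥ δn` contains a replica of `T_d`. -/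
theorem stmt16 (d : ℕ) (hd : 1 ≤ d) (δ : ℝ) (hδ0 : 0 < δ) (hδ1 : δ ≤ 1) :
    ∃ n₀ : ℕ, ∀ n : ℕ, n₀ ≤ n →
      (∑ i ∈ Finset.range d, (n.choose i : ℝ) < (2 : ℝ) ^ (δ * n)) ∧
      ∀ H : Set (List Bool), H ⊆ treeVerts n → δ * n ≤ weight H →
        ∃ f : List Bool → List Bool, IsRegEmb d f ∧
          ∀ x : List Bool, x.length < d → f x ∈ H := by
  obtain ⟨n₀, hn₀⟩ := Filter.eventually_atTop.mp (aux_eventually d hd δ hδ0)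
  refine ⟨n₀, fun n hn => ⟨hn₀ n hn, ?_⟩⟩
  intro H hsub hw
  by_contra hno
  have h1 := Stmt16.key_count n H hsub
  have h2 := Stmt16.sigs_card_small hsub hno
  have h3 : (2 : ℝ) ^ (δ * n) ≤ (2 : ℝ) ^ weight H :=
    Real.rpow_le_rpow_of_exponent_le one_le_two hw
  have h4 := hn₀ n hn
  linarith
end

section
/- Let H ⊆ V(T_n) with w(H) ≥ δn for δ ∈ (0,1), and set ε = h^{−1}(δ) where h is the binary entropy function restricted to (0,1/2]. Then H contains a replica of T_d with d = ⌊εn⌋, and the set of levels of T_n occupied by this replica is a subset of {0,1,…,n−1} of size ⌊εn⌋. -/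
noncomputable def lw (x : List Bool) : ℝ := (2 : ℝ) ^ (-(x.length : ℤ))

lemma weight_eq_sum {H : Set (List Bool)} (h : H.Finite) :
    weight H = ∑ x ∈ h.toFinset, lw x := by
  have h1 : weight H = ∑' x, H.indicator lw x := tsum_subtype H lw
  rw [h1, tsum_eq_sum (s := h.toFinset)
    (by intro b hb; exact Set.indicator_of_notMem (fun hbH => hb (h.mem_toFinset.mpr hbH)) _)]
  exact Finset.sum_congr rfl fun x hx => Set.indicator_of_mem (h.mem_toFinset.mp hx) _

lemma lw_cons (b : Bool) (t : List Bool) : lw (b :: t) = lw t / 2 := by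
  simp only [lw, List.length_cons]
  push_cast
  rw [neg_add, zpow_add₀ (two_ne_zero)]
  norm_num
  ring

lemma finite_sub (b : Bool) {H : Set (List Bool)} (h : H.Finite) :
    Set.Finite {t | b :: t ∈ H} := by
  have : {t | b :: t ∈ H} = (fun t => b :: t) ⁻¹' H := rfl
  rw [this]
  exact h.preimage (Set.injOn_of_injective (List.cons_injective))

open Classical in
lemma weight_split {H : Set (List Bool)} (h : H.Finite) :
    weight H = (if [] ∈ H then 1 else 0)
      + (weight {t | false :: t ∈ H} + weight {t | true :: t ∈ H}) / 2 := by
  classical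
  have key : ∀ b : Bool, weight {t | b :: t ∈ H}
      = 2 * ∑ x ∈ h.toFinset.filter (fun x => x.head? = some b), lw x := by
    intro b
    rw [weight_eq_sum (finite_sub b h)]
    have himg : h.toFinset.filter (fun x => x.head? = some b)
        = (finite_sub b h).toFinset.image (b :: ·) := by
      ext x
      simp only [Finset.mem_filter, Set.Finite.mem_toFinset, Finset.mem_image, Set.mem_setOf_eq]
      constructor
      · rintro ⟨hx, hh⟩
        cases x with
        | nil => simp at hh
        | cons c t =>
          simp only [List.head?_cons, Option.some.injEq] at hh
          exact ⟨t, by rw [hh] at hx; exact hx, by rw [hh]⟩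
      · rintro ⟨t, ht, rfl⟩
        exact ⟨ht, rfl⟩
    rw [himg, Finset.sum_image (by intro a _ c _ hac; exact List.cons_injective hac)]
    rw [Finset.sum_congr rfl (fun t _ => lw_cons b t), ← Finset.sum_div]
    ring
  have main := Finset.sum_fiberwise h.toFinset (fun x => x.head?) lw
  rw [weight_eq_sum h, ← main, Fintype.sum_option]
  have hnone : (h.toFinset.filter fun x => x.head? = none) = if [] ∈ H then {([] : List Bool)} else ∅ := by
    ext x
    simp only [Finset.mem_filter, Set.Finite.mem_toFinset, List.head?_eq_none_iff]
    by_cases hmem : ([] : List Bool) ∈ H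
    · simp only [if_pos hmem, Finset.mem_singleton]
      constructor
      · rintro ⟨_, rfl⟩; rfl
      · rintro rfl; exact ⟨hmem, rfl⟩
    · simp only [if_neg hmem, Finset.notMem_empty, iff_false, not_and]
      rintro hx rfl; exact hmem hx
  rw [hnone]
  have h1 : ∑ x ∈ (if [] ∈ H then {([] : List Bool)} else ∅), lw x = if [] ∈ H then 1 else 0 := by
    by_cases hmem : ([] : List Bool) ∈ H <;> simp [hmem, lw]
  rw [h1, Fintype.sum_bool, key, key]
  ring

lemma child_len {d f} (hf : IsRegEmb d f) {x : List Bool} (hx : x.length + 1 < d) (b : Bool) :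
    (f x).length + 1 ≤ (f (x ++ [b])).length := by
  obtain ⟨c, h0, h1⟩ := hf.2 x hx
  cases b
  · have := h0.length_le; simpa using this
  · have := h1.length_le; simpa using this

lemma len_lt {d f} (hf : IsRegEmb d f) :
    ∀ y : List Bool, y.length < d → ∀ x : List Bool, x.length < y.length →
      (f x).length < (f y).length := by
  intro y
  induction y using List.reverseRecOn with
  | nil => intro _ x hx; simp at hx
  | append_singleton ys b ih =>
    intro hy x hx
    simp only [List.length_append, List.length_singleton] at hy hx
    have hys : ys.length + 1 < d := by simpa using hy
    have hstep := child_len hf hys b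
    rcases Nat.lt_succ_iff_lt_or_eq.mp hx with h | h
    · have := ih (by omega) x h
      omega
    · have := hf.1 x ys (by omega) (by omega) h
      omega

/-- level function of an embedding -/
noncomputable def lev (f : List Bool → List Bool) (i : ℕ) : ℕ :=
  (f (List.replicate i false)).length

lemma len_eq_lev {d f} (hf : IsRegEmb d f) {x : List Bool} (hx : x.length < d) :
    (f x).length = lev f x.length :=
  hf.1 x (List.replicate x.length false) hx (by simpa using hx) (by simp)

lemma lev_strictMonoOn {d f} (hf : IsRegEmb d f) {i j : ℕ} (hj : j < d) (hij : i < j) :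
    lev f i < lev f j :=
  len_lt hf _ (by simpa using hj) _ (by simpa using hij)

lemma sig_eq_image {d f} (hf : IsRegEmb d f) :
    {l : ℕ | ∃ x : List Bool, x.length < d ∧ (f x).length = l} = lev f '' Set.Iio d := by
  ext l
  constructor
  · rintro ⟨x, hx, rfl⟩
    exact ⟨x.length, hx, (len_eq_lev hf hx).symm⟩
  · rintro ⟨i, hi, rfl⟩
    exact ⟨List.replicate i false, by simpa using hi, rfl⟩

lemma sig_ncard {d f} (hf : IsRegEmb d f) :
    {l : ℕ | ∃ x : List Bool, x.length < d ∧ (f x).length = l}.ncard = d := by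
  rw [sig_eq_image hf]
  rw [Set.ncard_image_of_injOn]
  · rw [← Finset.coe_Iio, Set.ncard_coe_finset, Nat.card_Iio]
  · intro i hi j hj hij
    by_contra hne
    rcases Nat.lt_or_ge i j with h | h
    · exact absurd hij (Nat.ne_of_lt (lev_strictMonoOn hf hj h))
    · exact absurd hij.symm (Nat.ne_of_lt (lev_strictMonoOn hf hi (by omega)))

lemma lev_eq_of_sig_eq {d f₀ f₁} (h₀ : IsRegEmb d f₀) (h₁ : IsRegEmb d f₁)
    (hσ : lev f₀ '' Set.Iio d = lev f₁ '' Set.Iio d) {i : ℕ} (hi : i < d) :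
    lev f₀ i = lev f₁ i := by
  classical
  set s : Finset ℕ := Finset.image (fun i : Fin d => lev f₀ i) Finset.univ with hs
  have hcard : s.card = d := by
    rw [hs, Finset.card_image_of_injOn, Finset.card_univ, Fintype.card_fin]
    intro a _ b _ hab
    by_contra hne
    rcases Nat.lt_or_ge (a : ℕ) b with h | h
    · exact absurd hab (Nat.ne_of_lt (lev_strictMonoOn h₀ b.2 h))
    · exact absurd hab.symm (Nat.ne_of_lt (lev_strictMonoOn h₀ a.2 (lt_of_le_of_ne h (fun he => hne (Fin.ext he.symm)))))
  have hscoe : (s : Set ℕ) = lev f₀ '' Set.Iio d := by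
    ext l
    simp only [hs, Finset.coe_image, Finset.coe_univ, Set.image_univ, Set.mem_range,
      Set.mem_image, Set.mem_Iio]
    constructor
    · rintro ⟨a, rfl⟩; exact ⟨a, a.2, rfl⟩
    · rintro ⟨a, ha, rfl⟩; exact ⟨⟨a, ha⟩, rfl⟩
  have hmono0 : StrictMono (fun i : Fin d => lev f₀ i) := fun a b hab => lev_strictMonoOn h₀ b.2 hab
  have hmono1 : StrictMono (fun i : Fin d => lev f₁ i) := fun a b hab => lev_strictMonoOn h₁ b.2 hab
  have hmem0 : ∀ a : Fin d, lev f₀ a ∈ s := fun a => Finset.mem_image_of_mem _ (Finset.mem_univ a)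
  have hmem1 : ∀ a : Fin d, lev f₁ a ∈ s := by
    intro a
    have : lev f₁ a ∈ lev f₁ '' Set.Iio d := ⟨a, a.2, rfl⟩
    rw [← hσ, ← hscoe] at this
    exact_mod_cast this
  have e0 := Finset.orderEmbOfFin_unique hcard hmem0 hmono0
  have e1 := Finset.orderEmbOfFin_unique hcard hmem1 hmono1
  have : (fun i : Fin d => lev f₀ i) = fun i : Fin d => lev f₁ i := by rw [e0, e1]
  exact congrFun this ⟨i, hi⟩

lemma empty_mem_sigs (H : Set (List Bool)) : ∅ ∈ sigs H := by
  refine ⟨0, id, ⟨fun x y hx => absurd hx (Nat.not_lt_zero _),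
    fun x hx => absurd hx (by omega)⟩, fun x hx => absurd hx (Nat.not_lt_zero _), ?_⟩
  ext l
  simp

lemma shift_mem_sigs {H : Set (List Bool)} (b : Bool) {σ : Set ℕ}
    (hσ : σ ∈ sigs {t | b :: t ∈ H}) : (fun l => l + 1) '' σ ∈ sigs H := by
  obtain ⟨d, f, hf, hmem, rfl⟩ := hσ
  refine ⟨d, fun x => b :: f x, ⟨?_, ?_⟩, fun x hx => hmem x hx, ?_⟩
  · intro x y hx hy hxy
    simpa using hf.1 x y hx hy hxy
  · intro x hx
    obtain ⟨c, h0, h1⟩ := hf.2 x hx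
    exact ⟨c, by simpa [List.cons_prefix_cons] using h0, by simpa [List.cons_prefix_cons] using h1⟩
  · ext l
    simp only [Set.mem_image, Set.mem_setOf_eq, List.length_cons]
    constructor
    · rintro ⟨m, ⟨x, hx, rfl⟩, rfl⟩; exact ⟨x, hx, rfl⟩
    · rintro ⟨x, hx, rfl⟩; exact ⟨(f x).length, ⟨x, hx, rfl⟩, rfl⟩

def comb (f₀ f₁ : List Bool → List Bool) : List Bool → List Bool
  | [] => []
  | false :: t => false :: f₀ t
  | true :: t => true :: f₁ t

lemma combine_mem_sigs {H : Set (List Bool)} {σ : Set ℕ} (hr : [] ∈ H)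
    (h0 : σ ∈ sigs {t | false :: t ∈ H}) (h1 : σ ∈ sigs {t | true :: t ∈ H}) :
    insert 0 ((fun l => l + 1) '' σ) ∈ sigs H := by
  obtain ⟨d₀, f₀, hf₀, hm₀, hs0⟩ := h0
  obtain ⟨d₁, f₁, hf₁, hm₁, hs1⟩ := h1
  have hd : d₁ = d₀ := by
    have e0 : σ.ncard = d₀ := by rw [hs0]; exact sig_ncard hf₀
    have e1 : σ.ncard = d₁ := by rw [hs1]; exact sig_ncard hf₁
    omega
  rw [hd] at hf₁ hm₁ hs1
  clear hd
  have hσeq : lev f₀ '' Set.Iio d₀ = lev f₁ '' Set.Iio d₀ := by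
    rw [← sig_eq_image hf₀, ← sig_eq_image hf₁, ← hs0, ← hs1]
  have hlen : ∀ (b : Bool) (t : List Bool), t.length < d₀ →
      ((cond b f₁ f₀) t).length = lev f₀ t.length := by
    intro b t ht
    cases b
    · exact len_eq_lev hf₀ ht
    · show (f₁ t).length = _
      rw [len_eq_lev hf₁ ht]; exact (lev_eq_of_sig_eq hf₀ hf₁ hσeq ht).symm
  have gcons : ∀ (b : Bool) (t : List Bool), comb f₀ f₁ (b :: t) = b :: (cond b f₁ f₀) t := by
    intro b t; cases b <;> rfl
  refine ⟨d₀ + 1, comb f₀ f₁, ⟨?_, ?_⟩, ?_, ?_⟩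
  · intro x y hx hy hxy
    cases x with
    | nil =>
      cases y with
      | nil => rfl
      | cons b t => simp at hxy
    | cons b t =>
      cases y with
      | nil => simp at hxy
      | cons b' t' =>
        simp only [List.length_cons, Nat.add_lt_add_iff_right, Nat.add_right_cancel_iff] at hx hy hxy
        rw [gcons, gcons]
        simp only [List.length_cons]
        rw [hlen b t hx, hlen b' t' hy, hxy]
  · intro x hx
    cases x with
    | nil =>
      refine ⟨false, ?_, ?_⟩
      · show ([] : List Bool) ++ [false] <+: comb f₀ f₁ [false]
        rw [show ([false] : List Bool) = false :: [] from rfl, gcons]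
        simp [List.cons_prefix_cons]
      · show ([] : List Bool) ++ [true] <+: comb f₀ f₁ [true]
        rw [show ([true] : List Bool) = true :: [] from rfl, gcons]
        simp [List.cons_prefix_cons]
    | cons b t =>
      simp only [List.length_cons] at hx
      have hx' : t.length + 1 < d₀ := by omega
      cases b
      · obtain ⟨c, hc0, hc1⟩ := hf₀.2 t hx'
        refine ⟨c, ?_, ?_⟩
        · show comb f₀ f₁ (false :: t) ++ [c] <+: comb f₀ f₁ (false :: (t ++ [false]))
          rw [gcons, gcons]
          simpa [List.cons_prefix_cons] using hc0
        · show comb f₀ f₁ (false :: t) ++ [!c] <+: comb f₀ f₁ (false :: (t ++ [true]))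
          rw [gcons, gcons]
          simpa [List.cons_prefix_cons] using hc1
      · obtain ⟨c, hc0, hc1⟩ := hf₁.2 t hx'
        refine ⟨c, ?_, ?_⟩
        · show comb f₀ f₁ (true :: t) ++ [c] <+: comb f₀ f₁ (true :: (t ++ [false]))
          rw [gcons, gcons]
          simpa [List.cons_prefix_cons] using hc0
        · show comb f₀ f₁ (true :: t) ++ [!c] <+: comb f₀ f₁ (true :: (t ++ [true]))
          rw [gcons, gcons]
          simpa [List.cons_prefix_cons] using hc1
  · intro x hx
    cases x with
    | nil => exact hr
    | cons b t =>
      simp only [List.length_cons, Nat.add_lt_add_iff_right] at hx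
      cases b
      · exact hm₀ t hx
      · exact hm₁ t hx
  · ext l
    simp only [Set.mem_setOf_eq, Set.mem_insert_iff, Set.mem_image]
    constructor
    · rintro (rfl | ⟨m, hm', rfl⟩)
      · exact ⟨[], by simp, rfl⟩
      · rw [hs0] at hm'
        obtain ⟨t, ht, rfl⟩ := hm'
        refine ⟨false :: t, by simpa using ht, ?_⟩
        rw [gcons]
        rfl
    · rintro ⟨x, hx, rfl⟩
      cases x with
      | nil => left; rfl
      | cons b t =>
        right
        simp only [List.length_cons, Nat.add_lt_add_iff_right] at hx
        rw [gcons]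
        cases b
        · exact ⟨(f₀ t).length, by rw [hs0]; exact ⟨t, hx, rfl⟩, rfl⟩
        · exact ⟨(f₁ t).length, by rw [hs1]; exact ⟨t, hx, rfl⟩, rfl⟩

lemma sig_subset_Iio {n : ℕ} {H : Set (List Bool)} (hH : H ⊆ treeVerts n) {σ : Set ℕ}
    (hσ : σ ∈ sigs H) : σ ⊆ Set.Iio n := by
  obtain ⟨d, f, hf, hm, rfl⟩ := hσ
  rintro l ⟨x, hx, rfl⟩
  exact hH (hm x hx)

lemma sigs_finite {n : ℕ} {H : Set (List Bool)} (hH : H ⊆ treeVerts n) : (sigs H).Finite :=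
  (Set.Finite.finite_subsets (Set.finite_Iio n)).subset (fun _ hσ => sig_subset_Iio hH hσ)

lemma shift_inj : Function.Injective (Set.image (fun l : ℕ => l + 1)) :=
  Set.image_injective.mpr (fun a b => by omega)

lemma ins_shift_inj : Function.Injective (fun σ : Set ℕ => insert 0 ((fun l : ℕ => l + 1) '' σ)) := by
  have h : ∀ u : Set ℕ, (fun l : ℕ => l + 1) '' u
      = (insert 0 ((fun l : ℕ => l + 1) '' u)) \ {0} := by
    intro u
    ext m
    simp only [Set.mem_image, Set.mem_diff, Set.mem_insert_iff, Set.mem_singleton_iff]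
    constructor
    · rintro ⟨l, hl, rfl⟩; exact ⟨Or.inr ⟨l, hl, rfl⟩, by omega⟩
    · rintro ⟨h1 | h1, h2⟩
      · exact absurd h1 h2
      · exact h1
  intro s t hst
  simp only at hst
  apply shift_inj
  rw [h s, h t, hst]

lemma sigs_card_ge : ∀ (n : ℕ) (H : Set (List Bool)), H ⊆ treeVerts n →
    (2 : ℝ) ^ (weight H) ≤ ((sigs H).ncard : ℝ) := by
  intro n
  induction n with
  | zero =>
    intro H hH
    have hempty : H = ∅ := by
      ext x; simp only [Set.mem_empty_iff_false, iff_false]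
      intro hx; exact absurd (hH hx) (by simp [treeVerts])
    subst hempty
    have hw : weight (∅ : Set (List Bool)) = 0 := by
      rw [weight]; exact tsum_empty
    rw [hw, Real.rpow_zero]
    have hfin : (sigs (∅ : Set (List Bool))).Finite := sigs_finite (n := 0) (by simp)
    have hpos : 0 < (sigs (∅ : Set (List Bool))).ncard :=
      (Set.ncard_pos hfin).mpr ⟨∅, empty_mem_sigs _⟩
    exact_mod_cast hpos
  | succ n ih =>
    intro H hH
    have hfin : H.Finite := (List.finite_length_lt (α := Bool) (n := n + 1)).subset hH
    set H₀ := {t | false :: t ∈ H} with hH₀def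
    set H₁ := {t | true :: t ∈ H} with hH₁def
    have hH₀ : H₀ ⊆ treeVerts n := by
      intro t ht
      have := hH ht
      simp only [treeVerts, Set.mem_setOf_eq, List.length_cons] at this ⊢
      omega
    have hH₁ : H₁ ⊆ treeVerts n := by
      intro t ht
      have := hH ht
      simp only [treeVerts, Set.mem_setOf_eq, List.length_cons] at this ⊢
      omega
    have ih₀ := ih H₀ hH₀
    have ih₁ := ih H₁ hH₁
    have fin : (sigs H).Finite := sigs_finite hH
    have fin₀ : (sigs H₀).Finite := sigs_finite hH₀
    have fin₁ : (sigs H₁).Finite := sigs_finite hH₁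
    set A := (Set.image (fun l : ℕ => l + 1)) '' sigs H₀ with hAdef
    set B := (Set.image (fun l : ℕ => l + 1)) '' sigs H₁ with hBdef
    have hA : A ⊆ sigs H := by rintro _ ⟨σ, hσ, rfl⟩; exact shift_mem_sigs false hσ
    have hB : B ⊆ sigs H := by rintro _ ⟨σ, hσ, rfl⟩; exact shift_mem_sigs true hσ
    have hAcard : A.ncard = (sigs H₀).ncard :=
      Set.ncard_image_of_injOn (Set.injOn_of_injective shift_inj)
    have hBcard : B.ncard = (sigs H₁).ncard :=
      Set.ncard_image_of_injOn (Set.injOn_of_injective shift_inj)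
    have wsplit := weight_split hfin
    rw [← hH₀def, ← hH₁def] at wsplit
    by_cases hr : ([] : List Bool) ∈ H
    · -- root in H
      set C := (fun σ : Set ℕ => insert 0 ((fun l : ℕ => l + 1) '' σ)) '' (sigs H₀ ∩ sigs H₁)
        with hCdef
      have hC : C ⊆ sigs H := by
        rintro _ ⟨σ, ⟨hσ0, hσ1⟩, rfl⟩
        exact combine_mem_sigs hr hσ0 hσ1
      have hCcard : C.ncard = (sigs H₀ ∩ sigs H₁).ncard :=
        Set.ncard_image_of_injOn (Set.injOn_of_injective ins_shift_inj)
      have hAB : A ∩ B = (Set.image (fun l : ℕ => l + 1)) '' (sigs H₀ ∩ sigs H₁) :=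
        (Set.image_inter shift_inj).symm
      have hdisj : Disjoint (A ∪ B) C := by
        rw [Set.disjoint_left]
        rintro τ hτ hτC
        obtain ⟨σ, -, hins⟩ := hτC
        have h0 : (0 : ℕ) ∈ τ := by rw [← hins]; exact Set.mem_insert _ _
        rcases hτ with ⟨ρ, -, hρ⟩ | ⟨ρ, -, hρ⟩ <;>
          · rw [← hρ] at h0
            obtain ⟨l, -, hl⟩ := h0
            have hl' : l + 1 = 0 := hl
            omega
      have hunion : (A ∪ B).ncard + C.ncard = ((A ∪ B) ∪ C).ncard :=
        (Set.ncard_union_eq hdisj ((fin.subset (Set.union_subset hA hB))) (fin.subset hC)).symm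
      have hIE : (A ∪ B).ncard + (A ∩ B).ncard = A.ncard + B.ncard :=
        Set.ncard_union_add_ncard_inter A B (fin.subset hA) (fin.subset hB)
      have hABC : ((A ∪ B) ∪ C).ncard ≤ (sigs H).ncard :=
        Set.ncard_le_ncard (Set.union_subset (Set.union_subset hA hB) hC) fin
      have hICC : (A ∩ B).ncard = C.ncard := by
        rw [hAB, hCcard]
        exact Set.ncard_image_of_injOn (Set.injOn_of_injective shift_inj)
      have hnat : (sigs H₀).ncard + (sigs H₁).ncard ≤ (sigs H).ncard :=
        calc (sigs H₀).ncard + (sigs H₁).ncard = A.ncard + B.ncard := by rw [hAcard, hBcard]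
          _ = (A ∪ B).ncard + (A ∩ B).ncard := hIE.symm
          _ = (A ∪ B).ncard + C.ncard := by rw [hICC]
          _ = ((A ∪ B) ∪ C).ncard := hunion
          _ ≤ (sigs H).ncard := hABC
      -- real estimate
      rw [wsplit, if_pos hr]
      have e1 : (1 : ℝ) + (weight H₀ + weight H₁) / 2 = (1 + weight H₀ / 2) + weight H₁ / 2 := by
        ring
      rw [e1, Real.rpow_add two_pos, Real.rpow_add two_pos, Real.rpow_one]
      set a := (2 : ℝ) ^ (weight H₀ / 2) with hadef
      set b := (2 : ℝ) ^ (weight H₁ / 2) with hbdef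
      have ha2 : a ^ 2 = (2 : ℝ) ^ (weight H₀) := by
        rw [hadef, ← Real.rpow_natCast _ 2, ← Real.rpow_mul (by norm_num)]
        norm_num
      have hb2 : b ^ 2 = (2 : ℝ) ^ (weight H₁) := by
        rw [hbdef, ← Real.rpow_natCast _ 2, ← Real.rpow_mul (by norm_num)]
        norm_num
      calc 2 * a * b ≤ a ^ 2 + b ^ 2 := two_mul_le_add_sq a b
        _ ≤ ((sigs H₀).ncard : ℝ) + ((sigs H₁).ncard : ℝ) := by
            rw [ha2, hb2]; exact add_le_add ih₀ ih₁
        _ ≤ ((sigs H).ncard : ℝ) := by exact_mod_cast hnat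
    · -- root not in H
      rw [wsplit, if_neg hr, zero_add]
      rcases le_total (weight H₀) (weight H₁) with hle | hle
      · calc (2 : ℝ) ^ ((weight H₀ + weight H₁) / 2)
            ≤ (2 : ℝ) ^ (weight H₁) :=
              Real.rpow_le_rpow_of_exponent_le one_le_two (by linarith)
          _ ≤ ((sigs H₁).ncard : ℝ) := ih₁
          _ ≤ ((sigs H).ncard : ℝ) := by
              have : (sigs H₁).ncard ≤ (sigs H).ncard := by
                rw [← hBcard]; exact Set.ncard_le_ncard hB fin
              exact_mod_cast this
      · calc (2 : ℝ) ^ ((weight H₀ + weight H₁) / 2)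
            ≤ (2 : ℝ) ^ (weight H₀) :=
              Real.rpow_le_rpow_of_exponent_le one_le_two (by linarith)
          _ ≤ ((sigs H₀).ncard : ℝ) := ih₀
          _ ≤ ((sigs H).ncard : ℝ) := by
              have : (sigs H₀).ncard ≤ (sigs H).ncard := by
                rw [← hAcard]; exact Set.ncard_le_ncard hA fin
              exact_mod_cast this

lemma regEmb_mono {d d' : ℕ} {f : List Bool → List Bool} (h : IsRegEmb d' f) (hdd : d ≤ d') :
    IsRegEmb d f :=
  ⟨fun x y hx hy => h.1 x y (lt_of_lt_of_le hx hdd) (lt_of_lt_of_le hy hdd),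
   fun x hx => h.2 x (by omega)⟩

lemma exists_replica {n : ℕ} {H : Set (List Bool)} (hH : H ⊆ treeVerts n) {d : ℕ}
    (h : ∃ σ ∈ sigs H, d ≤ σ.ncard) :
    ∃ f : List Bool → List Bool, IsRegEmb d f ∧
      (∀ x : List Bool, x.length < d → f x ∈ H) ∧
      {l : ℕ | ∃ x : List Bool, x.length < d ∧ (f x).length = l} ⊆ Set.Iio n ∧
      {l : ℕ | ∃ x : List Bool, x.length < d ∧ (f x).length = l}.ncard = d := by
  obtain ⟨σ, ⟨d', f, hf, hm, rfl⟩, hdd⟩ := h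
  rw [sig_ncard hf] at hdd
  have hfd : IsRegEmb d f := regEmb_mono hf hdd
  refine ⟨f, hfd, fun x hx => hm x (lt_of_lt_of_le hx hdd), ?_, sig_ncard hfd⟩
  rintro l ⟨x, hx, rfl⟩
  exact hH (hm x (lt_of_lt_of_le hx hdd))

open Classical in
lemma count_small {n d : ℕ} {H : Set (List Bool)} (hH : H ⊆ treeVerts n)
    (hall : ∀ σ ∈ sigs H, σ.ncard < d) :
    ((sigs H).ncard : ℝ) ≤ ∑ i ∈ Finset.range d, (n.choose i : ℝ) := by
  set Φ : Set ℕ → Finset ℕ := fun σ => if h : σ.Finite then h.toFinset else ∅ with hΦ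
  set T : Finset (Finset ℕ) := (Finset.Iio n).powerset.filter (fun s => s.card < d) with hT
  have hfinσ : ∀ σ ∈ sigs H, σ.Finite := fun σ hσ =>
    (Set.finite_Iio n).subset (sig_subset_Iio hH hσ)
  have hΦval : ∀ σ ∈ sigs H, ∃ h : σ.Finite, Φ σ = h.toFinset := by
    intro σ hσ
    exact ⟨hfinσ σ hσ, dif_pos _⟩
  have hinj : Set.InjOn Φ (sigs H) := by
    intro s hs t ht hst
    obtain ⟨h1, e1⟩ := hΦval s hs
    obtain ⟨h2, e2⟩ := hΦval t ht
    rw [e1, e2] at hst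
    have := congrArg (fun u : Finset ℕ => (u : Set ℕ)) hst
    simpa [Set.Finite.coe_toFinset] using this
  have himg : Φ '' sigs H ⊆ (T : Set (Finset ℕ)) := by
    rintro _ ⟨σ, hσ, rfl⟩
    obtain ⟨h1, e1⟩ := hΦval σ hσ
    rw [e1]
    simp only [hT, Finset.coe_filter, Set.mem_setOf_eq, Finset.mem_powerset]
    constructor
    · intro l hl
      exact Finset.mem_Iio.mpr (sig_subset_Iio hH hσ (h1.mem_toFinset.mp hl))
    · rw [← Set.ncard_eq_toFinset_card σ h1]
      exact hall σ hσ
  have hcard1 : (sigs H).ncard = (Φ '' sigs H).ncard := (Set.ncard_image_of_injOn hinj).symm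
  have hcard2 : (Φ '' sigs H).ncard ≤ T.card := by
    have := Set.ncard_le_ncard himg (T.finite_toSet)
    rwa [Set.ncard_coe_finset] at this
  have hTcard : T.card = ∑ i ∈ Finset.range d, n.choose i := by
    have hbi : T = (Finset.range d).biUnion (fun i => Finset.powersetCard i (Finset.Iio n)) := by
      ext s
      simp only [hT, Finset.mem_filter, Finset.mem_powerset, Finset.mem_biUnion,
        Finset.mem_range, Finset.mem_powersetCard]
      constructor
      · rintro ⟨h1, h2⟩; exact ⟨s.card, h2, h1, rfl⟩
      · rintro ⟨i, hi, h1, rfl⟩; exact ⟨h1, hi⟩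
    rw [hbi, Finset.card_biUnion]
    · apply Finset.sum_congr rfl
      intro i _
      rw [Finset.card_powersetCard, Nat.card_Iio]
    · intro i _ j _ hij
      rw [Function.onFun, Finset.disjoint_left]
      intro s hs hs'
      rw [Finset.mem_powersetCard] at hs hs'
      omega
  calc ((sigs H).ncard : ℝ) = ((Φ '' sigs H).ncard : ℝ) := by rw [hcard1]
    _ ≤ (T.card : ℝ) := by exact_mod_cast hcard2
    _ = ∑ i ∈ Finset.range d, (n.choose i : ℝ) := by rw [hTcard]; push_cast; rfl

lemma entropy_bound (n d : ℕ) (δ ε : ℝ) (hε0 : 0 < ε) (hε2 : ε ≤ 1 / 2)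
    (hεδ : -ε * Real.logb 2 ε - (1 - ε) * Real.logb 2 (1 - ε) = δ)
    (hd : (d : ℝ) ≤ ε * n) (hdn : d ≤ n) :
    ∑ i ∈ Finset.range d, (n.choose i : ℝ) < (2 : ℝ) ^ (δ * n) := by
  set p := ε with hp
  set q := 1 - ε with hq
  have hq0 : 0 < q := by rw [hq]; linarith
  have hpq : p + q = 1 := by rw [hp, hq]; ring
  have hple : p ≤ q := by rw [hp, hq]; linarith
  set r := p / q with hr
  have hr0 : 0 < r := div_pos hε0 hq0
  have hr1 : r ≤ 1 := (div_le_one hq0).mpr hple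
  have key : ∀ i : ℕ, i ≤ n → (i : ℝ) ≤ ε * n →
      (2 : ℝ) ^ (-(δ * n)) ≤ p ^ i * q ^ (n - i) := by
    intro i hin hieps
    have hqsplit : q ^ (n - i) = q ^ n / q ^ i := by
      rw [eq_div_iff (pow_ne_zero _ hq0.ne'), ← pow_add]
      congr 1
      omega
    have e1 : p ^ i * q ^ (n - i) = r ^ i * q ^ n := by
      rw [hqsplit, hr, div_pow]
      field_simp
    rw [e1]
    have e2 : r ^ i = r ^ ((i : ℝ)) := (Real.rpow_natCast r i).symm
    have e3 : q ^ n = q ^ ((n : ℝ)) := (Real.rpow_natCast q n).symm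
    rw [e2, e3]
    have step1 : r ^ (ε * n) ≤ r ^ ((i : ℝ)) :=
      Real.rpow_le_rpow_of_exponent_ge hr0 hr1 hieps
    have step2 : r ^ (ε * n) * q ^ ((n : ℝ)) = (2 : ℝ) ^ (-(δ * n)) := by
      have hrr : r = (2 : ℝ) ^ (Real.logb 2 r) :=
        (Real.rpow_logb two_pos (by norm_num) hr0).symm
      have hqq : q = (2 : ℝ) ^ (Real.logb 2 q) :=
        (Real.rpow_logb two_pos (by norm_num) hq0).symm
      calc r ^ (ε * n) * q ^ ((n : ℝ))
          = ((2:ℝ) ^ (Real.logb 2 r)) ^ (ε * n) * ((2:ℝ) ^ (Real.logb 2 q)) ^ ((n:ℝ)) := by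
            rw [← hrr, ← hqq]
        _ = (2:ℝ) ^ (Real.logb 2 r * (ε * n)) * (2:ℝ) ^ (Real.logb 2 q * (n:ℝ)) := by
            rw [← Real.rpow_mul (by norm_num), ← Real.rpow_mul (by norm_num)]
        _ = (2:ℝ) ^ (Real.logb 2 r * (ε * n) + Real.logb 2 q * (n:ℝ)) := by
            rw [← Real.rpow_add two_pos]
        _ = (2:ℝ) ^ (-(δ * n)) := by
            congr 1
            rw [hr, Real.logb_div hε0.ne' hq0.ne']
            rw [← hεδ]
            ring
    calc (2:ℝ) ^ (-(δ * n)) = r ^ (ε * n) * q ^ ((n:ℝ)) := step2.symm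
      _ ≤ r ^ ((i:ℝ)) * q ^ ((n:ℝ)) := by
          apply mul_le_mul_of_nonneg_right step1
          exact le_of_lt (Real.rpow_pos_of_pos hq0 _)
  have sum1 : ∑ i ∈ Finset.range (n + 1), p ^ i * q ^ (n - i) * (n.choose i : ℝ) = 1 := by
    rw [← add_pow, hpq, one_pow]
  have strict : ∑ i ∈ Finset.range d, p ^ i * q ^ (n - i) * (n.choose i : ℝ) < 1 := by
    rw [← sum1]
    apply Finset.sum_lt_sum_of_subset (Finset.range_subset_range.mpr (by omega))
      (i := d) (by simp; omega) (by simp)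
    · have : 0 < (n.choose d : ℝ) := by exact_mod_cast Nat.choose_pos hdn
      positivity
    · intro j _ _
      positivity
  have chain : (∑ i ∈ Finset.range d, (n.choose i : ℝ)) * (2:ℝ) ^ (-(δ * n))
      ≤ ∑ i ∈ Finset.range d, p ^ i * q ^ (n - i) * (n.choose i : ℝ) := by
    rw [Finset.sum_mul]
    apply Finset.sum_le_sum
    intro i hi
    rw [Finset.mem_range] at hi
    have h1 : (i : ℝ) ≤ ε * n := by
      have : (i : ℝ) < (d : ℝ) := by exact_mod_cast hi
      linarith
    have h2 := key i (by omega) h1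
    calc (n.choose i : ℝ) * (2:ℝ) ^ (-(δ * n)) = (2:ℝ) ^ (-(δ * n)) * (n.choose i : ℝ) := by ring
      _ ≤ p ^ i * q ^ (n - i) * (n.choose i : ℝ) := by
          apply mul_le_mul_of_nonneg_right h2
          positivity
  have hS : (∑ i ∈ Finset.range d, (n.choose i : ℝ)) * (2:ℝ) ^ (-(δ * n)) < 1 :=
    lt_of_le_of_lt chain strict
  have hpos : (0:ℝ) < (2:ℝ) ^ (δ * n) := Real.rpow_pos_of_pos two_pos _
  have hinv : (2:ℝ) ^ (-(δ * n)) * (2:ℝ) ^ (δ * n) = 1 := by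
    rw [← Real.rpow_add two_pos]
    simp
  calc ∑ i ∈ Finset.range d, (n.choose i : ℝ)
      = (∑ i ∈ Finset.range d, (n.choose i : ℝ)) * ((2:ℝ) ^ (-(δ * n)) * (2:ℝ) ^ (δ * n)) := by
        rw [hinv, mul_one]
    _ = ((∑ i ∈ Finset.range d, (n.choose i : ℝ)) * (2:ℝ) ^ (-(δ * n))) * (2:ℝ) ^ (δ * n) := by
        ring
    _ < 1 * (2:ℝ) ^ (δ * n) := by
        exact mul_lt_mul_of_pos_right hS hpos
    _ = (2:ℝ) ^ (δ * n) := one_mul _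


/-- If `H ⊆ V(T_n)` has `w(H) ≥ δn` for `δ ∈ (0,1)` and `ε = h⁻¹(δ)` (i.e.
`ε ∈ (0,1/2]` with binary entropy `h(ε) = δ`), then `H` contains a replica of
`T_d` with `d = ⌊εn⌋`, and the set of levels of `T_n` occupied by the replica
is a subset of `{0,…,n-1}` of size `⌊εn⌋`. -/
theorem stmt17 (n : ℕ) (δ ε : ℝ) (hδ0 : 0 < δ) (hδ1 : δ < 1)
    (hε0 : 0 < ε) (hε2 : ε ≤ 1 / 2)
    (hεδ : -ε * Real.logb 2 ε - (1 - ε) * Real.logb 2 (1 - ε) = δ)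
    (H : Set (List Bool)) (hH : H ⊆ treeVerts n) (hw : δ * n ≤ weight H) :
    ∃ f : List Bool → List Bool, IsRegEmb ⌊ε * n⌋₊ f ∧
      (∀ x : List Bool, x.length < ⌊ε * n⌋₊ → f x ∈ H) ∧
      {l : ℕ | ∃ x : List Bool, x.length < ⌊ε * n⌋₊ ∧ (f x).length = l} ⊆
        Set.Iio n ∧
      {l : ℕ | ∃ x : List Bool, x.length < ⌊ε * n⌋₊ ∧ (f x).length = l}.ncard =
        ⌊ε * n⌋₊ := by
  set d := ⌊ε * n⌋₊ with hd
  apply exists_replica hH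
  by_cases hd0 : d = 0
  · exact ⟨∅, empty_mem_sigs H, by simp [hd0]⟩
  · by_contra hcon
    push_neg at hcon
    have hcount := count_small hH (fun σ hσ => hcon σ hσ)
    have hdle : (d : ℝ) ≤ ε * n := by
      rw [hd]
      exact Nat.floor_le (by positivity)
    have hdn : d ≤ n := by
      have h1 : ε * n ≤ (n : ℝ) := by nlinarith [Nat.cast_nonneg (α := ℝ) n]
      exact_mod_cast le_trans hdle h1
    have hent := entropy_bound n d δ ε hε0 hε2 hεδ hdle hdn
    have h1 : (2:ℝ) ^ (δ * n) ≤ (2:ℝ) ^ (weight H) :=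
      Real.rpow_le_rpow_of_exponent_le one_le_two hw
    have h2 := sigs_card_ge n H hH
    linarith
end
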